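/- Contraction estimate for the scattering operator: let L > 0, let σ : [0,L] → ℝ be continuous nonnegative, and let g : [0,L] → ℝ be measurable with |g(t)| ≤ σ(t)·C for all t, where C ≥ 0. Then |∫₀^L exp(-∫₀^t σ(s) ds)·g(t) dt| ≤ (1 - exp(-∫₀^L σ(s) ds))·C < C whenever C > 0 and ∫₀^L σ > 0. -/

import Mathlib

open MeasureTheory

theorem scattering_contraction
    (L : ℝ) (hL : 0 < L) (σ : ℝ → ℝ) (hσ : Continuous σ)
    (hσ0 : ∀ t ∈ Set.Icc (0:ℝ) L, 0 ≤ σ t)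
    (g : ℝ → ℝ) (hg : Measurable g) (C : ℝ) (hC0 : 0 ≤ C)
    (hdom : ∀ t ∈ Set.Icc (0:ℝ) L, |g t| ≤ σ t * C)
    (hCpos : 0 < C) (hσint : 0 < ∫ s in (0:ℝ)..L, σ s) :
    |∫ t in (0:ℝ)..L, Real.exp (-∫ s in (0:ℝ)..t, σ s) * g t| ≤
        (1 - Real.exp (-∫ s in (0:ℝ)..L, σ s)) * C ∧
      (1 - Real.exp (-∫ s in (0:ℝ)..L, σ s)) * C < C := by
  set S : ℝ → ℝ := fun t => ∫ s in (0:ℝ)..t, σ s with hSdef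
  have hS : ∀ t : ℝ, HasDerivAt S (σ t) t := fun t =>
    intervalIntegral.integral_hasDerivAt_right (hσ.intervalIntegrable _ _)
      hσ.stronglyMeasurable.stronglyMeasurableAtFilter hσ.continuousAt
  have hScont : Continuous S := continuous_iff_continuousAt.mpr fun t => (hS t).continuousAt
  have hE : Continuous fun t => Real.exp (-S t) := Real.continuous_exp.comp hScont.neg
  have hderiv : ∀ t : ℝ, HasDerivAt (fun u => -Real.exp (-S u)) (σ t * Real.exp (-S t)) t := by
    intro t
    have h1 : HasDerivAt (fun u => -Real.exp (-S u)) (-(Real.exp (-S t) * -σ t)) t :=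
      ((hS t).neg).exp.neg
    convert h1 using 1
    ring
  have hS0 : S 0 = 0 := intervalIntegral.integral_same
  have hFTC : ∫ t in (0:ℝ)..L, σ t * Real.exp (-S t) = 1 - Real.exp (-S L) := by
    rw [intervalIntegral.integral_eq_sub_of_hasDerivAt (fun t _ => hderiv t)
      ((hσ.mul hE).intervalIntegrable _ _)]
    simp [hS0]
    ring
  have hbd_cont : Continuous fun t => Real.exp (-S t) * (σ t * C) :=
    hE.mul (hσ.mul continuous_const)
  have hmem : ∀ t ∈ Set.uIoc (0:ℝ) L, t ∈ Set.Icc (0:ℝ) L := by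
    intro t ht
    rw [Set.uIoc_of_le hL.le] at ht
    exact ⟨ht.1.le, ht.2⟩
  have hInt_f : IntervalIntegrable (fun t => Real.exp (-S t) * g t) volume 0 L := by
    apply IntervalIntegrable.mono_fun (hbd_cont.intervalIntegrable _ _)
      ((hE.measurable.mul hg).aestronglyMeasurable)
    filter_upwards [ae_restrict_mem measurableSet_uIoc] with t ht
    have h := hdom t (hmem t ht)
    have hσt := hσ0 t (hmem t ht)
    have he := (Real.exp_pos (-S t)).le
    simp only [Pi.mul_apply, Real.norm_eq_abs, abs_mul, abs_of_nonneg he, abs_of_nonneg hσt,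
      abs_of_nonneg hC0]
    exact mul_le_mul_of_nonneg_left h he
  constructor
  · calc |∫ t in (0:ℝ)..L, Real.exp (-S t) * g t|
        ≤ ∫ t in (0:ℝ)..L, |Real.exp (-S t) * g t| :=
          intervalIntegral.abs_integral_le_integral_abs hL.le
      _ ≤ ∫ t in (0:ℝ)..L, Real.exp (-S t) * (σ t * C) := by
          apply intervalIntegral.integral_mono_on hL.le hInt_f.abs
            (hbd_cont.intervalIntegrable _ _)
          intro t ht
          have h := hdom t ht
          have he := (Real.exp_pos (-S t)).le
          rw [abs_mul, abs_of_nonneg he]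
          exact mul_le_mul_of_nonneg_left h he
      _ = (1 - Real.exp (-S L)) * C := by
          rw [← hFTC, ← intervalIntegral.integral_mul_const]
          congr 1; ext t; ring
  · have he := Real.exp_pos (-S L)
    nlinarith
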